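/- For any testing procedure 𝒟 rejecting exactly the hypotheses with p-values at most α·R_𝒟/K, the FDP expectation admits the decomposition E[F_𝒟/(R_𝒟∨1)] = Σ_{k∈𝒩} ( Σ_{r=1}^K E[1{P_k ≤ αR_𝒟/K}·1{R_𝒟 ≤ r}]/(r(r+1)) + E[1{P_k ≤ αR_𝒟/K}]/(K+1) ). -/

import Mathlib

open MeasureTheory ProbabilityTheory Finset
open scoped ENNReal Classical

noncomputable section

/-- The `i`-th smallest value (0-indexed) among `p 0, …, p (K-1)`. -/
def sortAsc {K : ℕ} (p : Fin K → ℝ) : Fin K → ℝ := p ∘ Tuple.sort p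

/-- The `i`-th largest value (0-indexed) among `e 0, …, e (K-1)`. -/
def sortDesc {K : ℕ} (e : Fin K → ℝ) : Fin K → ℝ := e ∘ Tuple.sort (fun j => -e j)

/-- `k* = max {k : K p_(k) / k ≤ α}` (with `max ∅ = 0`), the BH rejection count. -/
def bhCount (K : ℕ) (α : ℝ) (p : Fin K → ℝ) : ℕ :=
  (univ.filter (fun i : Fin K => (K : ℝ) * sortAsc p i / (i.1 + 1) ≤ α)).sup
    (fun i => i.1 + 1)

/-- The BH procedure rejects the hypotheses carrying the `k*` smallest p-values. -/
def bhRejects (K : ℕ) (α : ℝ) (p : Fin K → ℝ) : Finset (Fin K) :=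
  univ.filter (fun k => ∃ i : Fin K, i.1 + 1 ≤ bhCount K α p ∧ p k ≤ sortAsc p i)

/-- `k* = max {k : k e_[k] / K ≥ 1/α}`, the e-BH rejection count. -/
def ebhCount (K : ℕ) (α : ℝ) (e : Fin K → ℝ) : ℕ :=
  (univ.filter (fun i : Fin K => 1 / α ≤ (i.1 + 1) * sortDesc e i / K)).sup
    (fun i => i.1 + 1)

/-- The e-BH procedure rejects the hypotheses carrying the `k*` largest e-values. -/
def ebhRejects (K : ℕ) (α : ℝ) (e : Fin K → ℝ) : Finset (Fin K) :=
  univ.filter (fun k => ∃ i : Fin K, i.1 + 1 ≤ ebhCount K α e ∧ sortDesc e i ≤ e k)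

/-- Simes function `S_K(p) = min_k (K/k) p_(k)`. -/
def simes (K : ℕ) (p : Fin K → ℝ) : ℝ := ⨅ i : Fin K, (K : ℝ) / (i.1 + 1) * sortAsc p i

/-- Harmonic number `ℓ_K = ∑_{k=1}^K 1/k`. -/
def harm (K : ℕ) : ℝ := ∑ k ∈ Finset.Icc 1 K, (1 : ℝ) / k

/-- An increasing (upper) subset of `ℝ^K`. -/
def IncreasingSet {K : ℕ} (A : Set (Fin K → ℝ)) : Prop := ∀ x ∈ A, ∀ y, x ≤ y → y ∈ A

/-- Positive regression dependence on the subset `N` of nulls. -/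
def PRDS {Ω : Type*} [MeasurableSpace Ω] (μ : Measure Ω) {K : ℕ}
    (P : Fin K → Ω → ℝ) (N : Finset (Fin K)) : Prop :=
  ∀ k ∈ N, ∀ A : Set (Fin K → ℝ), MeasurableSet A → IncreasingSet A →
    Monotone (fun x : ℝ => μ[|{ω | P k ω ≤ x}] {ω | (fun j => P j ω) ∈ A})

/-- False discovery proportion of a rejection set `D` w.r.t. the null set `N`. -/
def fdp {K : ℕ} (D N : Finset (Fin K)) : ℝ := ((D ∩ N).card : ℝ) / (max D.card 1 : ℕ)

end

/-- For a procedure rejecting exactly the hypotheses with p-values at most `α R_𝒟 / K`,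
the expected FDP decomposes as
`E[F/(R ∨ 1)] = ∑_{k ∈ 𝒩} (∑_{r=1}^K E[1_{P_k ≤ αR/K} 1_{R ≤ r}]/(r(r+1))
  + E[1_{P_k ≤ αR/K}]/(K+1))`. -/
lemma tele (a : ℕ) (ha : 1 ≤ a) : ∀ K, a ≤ K →
    ∑ r ∈ Finset.Icc a K, (1:ℝ)/((r:ℝ)*((r:ℝ)+1)) = 1/(a:ℝ) - 1/((K:ℝ)+1) := by
  intro K
  induction K with
  | zero => omega
  | succ n ih =>
    intro h
    rcases Nat.lt_or_ge n a with hn | hn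
    · have : a = n + 1 := by omega
      subst this
      simp only [Finset.Icc_self, Finset.sum_singleton]
      have h1 : ((n:ℝ)+1) ≠ 0 := by positivity
      have h2 : ((n:ℝ)+1+1) ≠ 0 := by positivity
      push_cast
      field_simp
      ring
    · rw [Finset.sum_Icc_succ_top (by omega), ih hn]
      have h1 : ((n:ℝ)+1) ≠ 0 := by positivity
      have h2 : ((n:ℝ)+1+1) ≠ 0 := by positivity
      have h3 : (a:ℝ) ≠ 0 := by positivity
      push_cast
      field_simp
      ring

lemma key (K m : ℕ) (hK : 0 < K) (hm : m ≤ K) :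
    (1:ℝ)/((max m 1 : ℕ):ℝ) =
      (∑ r ∈ Finset.Icc 1 K, (if m ≤ r then (1:ℝ) else 0)/((r:ℝ)*((r:ℝ)+1))) + 1/((K:ℝ)+1) := by
  have hfilter : Finset.filter (fun r => m ≤ r) (Finset.Icc 1 K) = Finset.Icc (max m 1) K := by
    ext r; simp only [Finset.mem_filter, Finset.mem_Icc]; omega
  have : ∑ r ∈ Finset.Icc 1 K, (if m ≤ r then (1:ℝ) else 0)/((r:ℝ)*((r:ℝ)+1))
      = ∑ r ∈ Finset.filter (fun r => m ≤ r) (Finset.Icc 1 K), (1:ℝ)/((r:ℝ)*((r:ℝ)+1)) := by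
    rw [Finset.sum_filter]
    congr 1; ext r
    by_cases h : m ≤ r <;> simp [h]
  rw [this, hfilter, tele (max m 1) (le_max_right _ _) K (by omega)]
  ring

theorem fdp_decomposition
    {Ω : Type*} [MeasurableSpace Ω] (μ : Measure Ω) [IsProbabilityMeasure μ]
    {K : ℕ} (hK : 0 < K) {α : ℝ} (hα : α ∈ Set.Ioo (0 : ℝ) 1)
    (P : Fin K → Ω → ℝ) (hP : ∀ k, Measurable (P k)) (N : Finset (Fin K))
    (R : Ω → ℕ) (hR : Measurable R) (hRK : ∀ ω, R ω ≤ K) :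
    ∫ ω, ((N.filter (fun k => P k ω ≤ α * R ω / K)).card : ℝ) / (max (R ω) 1 : ℕ) ∂μ =
      ∑ k ∈ N,
        ((∑ r ∈ Finset.Icc 1 K,
            (∫ ω, (if P k ω ≤ α * R ω / K then (1 : ℝ) else 0) *
                (if R ω ≤ r then (1 : ℝ) else 0) ∂μ) / ((r : ℝ) * (r + 1))) +
          (∫ ω, (if P k ω ≤ α * R ω / K then (1 : ℝ) else 0) ∂μ) / ((K : ℝ) + 1)) := by
  set f : Fin K → Ω → ℝ := fun k ω => if P k ω ≤ α * R ω / K then (1:ℝ) else 0 with hf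
  set g : ℕ → Ω → ℝ := fun r ω => if R ω ≤ r then (1:ℝ) else 0 with hg
  have hRmeas : Measurable fun ω => ((R ω : ℝ)) := measurable_from_top.comp hR
  have hmf : ∀ k, Measurable (f k) := by
    intro k
    exact Measurable.ite
      (measurableSet_le (hP k) ((measurable_const.mul hRmeas).div_const _))
      measurable_const measurable_const
  have hmg : ∀ r, Measurable (g r) := by
    intro r
    exact Measurable.ite (hR measurableSet_Iic) measurable_const measurable_const
  have hbf : ∀ k ω, |f k ω| ≤ 1 := by
    intro k ω; simp only [hf]; split <;> norm_num
  have hbg : ∀ r ω, |g r ω| ≤ 1 := by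
    intro r ω; simp only [hg]; split <;> norm_num
  have hintf : ∀ k, Integrable (f k) μ := by
    intro k
    exact (integrable_const (1:ℝ)).mono' (hmf k).aestronglyMeasurable
      (Filter.Eventually.of_forall fun ω => by simpa using hbf k ω)
  have hintfg : ∀ k r, Integrable (fun ω => f k ω * g r ω) μ := by
    intro k r
    refine (integrable_const (1:ℝ)).mono' ((hmf k).mul (hmg r)).aestronglyMeasurable
      (Filter.Eventually.of_forall fun ω => ?_)
    rw [Real.norm_eq_abs, abs_mul]
    calc |f k ω| * |g r ω| ≤ 1 * 1 := by
          exact mul_le_mul (hbf k ω) (hbg r ω) (abs_nonneg _) zero_le_one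
      _ = 1 := by norm_num
  -- pointwise identity
  have hpt : ∀ ω, ((N.filter (fun k => P k ω ≤ α * R ω / K)).card : ℝ) / (max (R ω) 1 : ℕ)
      = ∑ k ∈ N, ((∑ r ∈ Finset.Icc 1 K, f k ω * g r ω / ((r:ℝ)*((r:ℝ)+1)))
          + f k ω / ((K:ℝ)+1)) := by
    intro ω
    have hcard : ((N.filter (fun k => P k ω ≤ α * R ω / K)).card : ℝ) = ∑ k ∈ N, f k ω := by
      rw [Finset.card_filter]
      push_cast
      rfl
    rw [hcard, Finset.sum_div]
    refine Finset.sum_congr rfl fun k _ => ?_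
    have hk := key K (R ω) hK (hRK ω)
    calc f k ω / ((max (R ω) 1 : ℕ):ℝ)
        = f k ω * ((1:ℝ)/((max (R ω) 1 : ℕ):ℝ)) := by ring
      _ = f k ω * ((∑ r ∈ Finset.Icc 1 K, (if R ω ≤ r then (1:ℝ) else 0)/((r:ℝ)*((r:ℝ)+1)))
            + 1/((K:ℝ)+1)) := by rw [hk]
      _ = (∑ r ∈ Finset.Icc 1 K, f k ω * g r ω / ((r:ℝ)*((r:ℝ)+1))) + f k ω / ((K:ℝ)+1) := by
          rw [mul_add, Finset.mul_sum]
          congr 1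
          · refine Finset.sum_congr rfl fun r _ => ?_
            simp only [hg]; ring
          · ring
  calc ∫ ω, ((N.filter (fun k => P k ω ≤ α * R ω / K)).card : ℝ) / (max (R ω) 1 : ℕ) ∂μ
      = ∫ ω, ∑ k ∈ N, ((∑ r ∈ Finset.Icc 1 K, f k ω * g r ω / ((r:ℝ)*((r:ℝ)+1)))
          + f k ω / ((K:ℝ)+1)) ∂μ := by
        exact integral_congr_ae (Filter.Eventually.of_forall hpt)
    _ = ∑ k ∈ N, ∫ ω, ((∑ r ∈ Finset.Icc 1 K, f k ω * g r ω / ((r:ℝ)*((r:ℝ)+1)))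
          + f k ω / ((K:ℝ)+1)) ∂μ := by
        refine integral_finset_sum _ fun k _ => ?_
        exact ((integrable_finset_sum _ fun r _ => (hintfg k r).div_const _).add
          ((hintf k).div_const _))
    _ = ∑ k ∈ N, ((∑ r ∈ Finset.Icc 1 K,
            (∫ ω, f k ω * g r ω ∂μ) / ((r : ℝ) * ((r:ℝ) + 1))) +
          (∫ ω, f k ω ∂μ) / ((K : ℝ) + 1)) := by
        refine Finset.sum_congr rfl fun k _ => ?_
        rw [integral_add (integrable_finset_sum _ fun r _ => (hintfg k r).div_const _)
          ((hintf k).div_const _),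
          integral_finset_sum _ fun r _ => (hintfg k r).div_const _]
        congr 1
        · refine Finset.sum_congr rfl fun r _ => ?_
          rw [integral_div]
        · rw [integral_div]
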